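/- arXiv:2005.11448 — 2 statements merged into one kernel-verified Lean document; each statement's English description precedes it below -/
import Mathlib

section
/- Let H be a complex Hilbert space and let A, B be positive invertible bounded operators on H. Then for every v ∈ (0,1), in the Loewner order: A♯_v B ≤ (1−v)·(A♯_{v/2} B) + v·(A♯_{(1+v)/2} B) ≤ L_v(A,B) ≤ ((A♯_v B) + (A∇_v B))/2 ≤ A∇_v B. -/
/-- Scalar weighted logarithmic mean `L_v(a,b)`, extended by `L_v(a,a) = a`. -/
noncomputable def wLogScalar (v a b : ℝ) : ℝ :=
  if a = b then a else
    (1 / (Real.log a - Real.log b)) *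
      (((1 - v) / v) * (a - a ^ (1 - v) * b ^ v) + (v / (1 - v)) * (a ^ (1 - v) * b ^ v - b))

/-- Scalar weighted identric mean `I_v(a,b)`, extended by `I_v(a,a) = a`. -/
noncomputable def wIdScalar (v a b : ℝ) : ℝ :=
  if a = b then a else
    Real.exp (-1) *
      ((1 - v) * a + v * b) ^
        ((1 - 2 * v) * ((1 - v) * a + v * b) / (v * (1 - v) * (b - a))) *
      (b ^ (v * b / (1 - v)) / a ^ ((1 - v) * a / v)) ^ (b - a)⁻¹

variable {H : Type*} [NormedAddCommGroup H] [InnerProductSpace ℂ H] [CompleteSpace H]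

/-- The operator mean `m_f(A,B) = A^{1/2} f(A^{-1/2} B A^{-1/2}) A^{1/2}` associated to a
function `f : (0,∞) → ℝ` with `f(1) = 1`, via the continuous functional calculus. -/
noncomputable def opMeanOf (f : ℝ → ℝ) (A B : H →L[ℂ] H) : H →L[ℂ] H :=
  cfc Real.sqrt A *
    cfc f (Ring.inverse (cfc Real.sqrt A) * B * Ring.inverse (cfc Real.sqrt A)) *
      cfc Real.sqrt A

/-- The weighted operator arithmetic mean `A ∇_v B = (1-v)A + vB`. -/
noncomputable def opWArith (v : ℝ) (A B : H →L[ℂ] H) : H →L[ℂ] H :=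
  (1 - v : ℝ) • A + v • B

/-- The weighted operator geometric mean `A ♯_v B = A^{1/2}(A^{-1/2}BA^{-1/2})^v A^{1/2}`. -/
noncomputable def opWGeom (v : ℝ) (A B : H →L[ℂ] H) : H →L[ℂ] H :=
  opMeanOf (fun x => x ^ v) A B

/-- The operator logarithmic mean, with representing function `f_L(x) = (x-1)/log x`. -/
noncomputable def opLog (A B : H →L[ℂ] H) : H →L[ℂ] H :=
  opMeanOf (fun x => if x = 1 then 1 else (x - 1) / Real.log x) A B

/-- The operator identric mean, with representing function `f_I(x) = e⁻¹ x^{x/(x-1)}`. -/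
noncomputable def opId (A B : H →L[ℂ] H) : H →L[ℂ] H :=
  opMeanOf (fun x => if x = 1 then 1 else Real.exp (-1) * x ^ (x / (x - 1))) A B

/-- The weighted operator logarithmic mean, with representing function `F_{L_v}(x) = L_v(1,x)`. -/
noncomputable def opWLog (v : ℝ) (A B : H →L[ℂ] H) : H →L[ℂ] H :=
  opMeanOf (fun x => wLogScalar v 1 x) A B

/-- The weighted operator identric mean, with representing function `F_{I_v}(x) = I_v(1,x)`. -/
noncomputable def opWId (v : ℝ) (A B : H →L[ℂ] H) : H →L[ℂ] H :=
  opMeanOf (fun x => wIdScalar v 1 x) A B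

/-! ### Auxiliary scalar lemmas -/

/-- The function `(e^s - 1)/s`, extended by `1` at `s = 0`. -/
noncomputable def phiAux (s : ℝ) : ℝ := if s = 0 then 1 else (Real.exp s - 1) / s

lemma phiAux_eq {s : ℝ} (hs : s ≠ 0) :
    phiAux s = Real.exp (s / 2) * (Real.sinh (s / 2) / (s / 2)) := by
  rw [phiAux, if_neg hs]
  rw [Real.sinh_eq]
  have h1 : Real.exp s - 1 = Real.exp (s / 2) * (Real.exp (s / 2) - Real.exp (-(s / 2))) := by
    rw [mul_sub, ← Real.exp_add, ← Real.exp_add]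
    norm_num
  rw [h1]
  field_simp

lemma one_le_sinh_div {u : ℝ} (hu : u ≠ 0) : 1 ≤ Real.sinh u / u := by
  rcases hu.lt_or_gt with h | h
  · rw [le_div_iff_of_neg h, one_mul]
    exact Real.sinh_le_self_iff.mpr h.le
  · rw [le_div_iff₀ h, one_mul]
    exact Real.self_le_sinh_iff.mpr h.le

lemma sinh_le_mul_cosh (u : ℝ) (hu : 0 ≤ u) : Real.sinh u ≤ u * Real.cosh u := by
  have key : MonotoneOn (fun u : ℝ => u * Real.cosh u - Real.sinh u) (Set.Ici 0) := by
    apply monotoneOn_of_deriv_nonneg (convex_Ici 0)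
    · exact ((continuous_id.mul Real.continuous_cosh).sub Real.continuous_sinh).continuousOn
    · exact ((differentiable_id.mul Real.differentiable_cosh).sub
        Real.differentiable_sinh).differentiableOn
    · intro x hx
      rw [interior_Ici] at hx
      have hd : HasDerivAt (fun u : ℝ => u * Real.cosh u - Real.sinh u)
          (1 * Real.cosh x + x * Real.sinh x - Real.cosh x) x :=
        ((hasDerivAt_id x).mul (Real.hasDerivAt_cosh x)).sub (Real.hasDerivAt_sinh x)
      rw [hd.deriv]
      have : (0:ℝ) ≤ x * Real.sinh x :=
        mul_nonneg (le_of_lt hx) (Real.sinh_nonneg_iff.mpr (le_of_lt hx))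
      linarith
  have h0 := key (Set.self_mem_Ici) (Set.mem_Ici.mpr hu) hu
  simp only [Real.sinh_zero, Real.cosh_zero, mul_zero, zero_mul, sub_zero, zero_sub, neg_zero]
    at h0
  linarith [h0]

lemma sinh_div_le_cosh {u : ℝ} (hu : u ≠ 0) : Real.sinh u / u ≤ Real.cosh u := by
  rcases hu.lt_or_gt with h | h
  · have := sinh_le_mul_cosh (-u) (by linarith)
    rw [Real.sinh_neg, Real.cosh_neg] at this
    rw [div_le_iff_of_neg h]
    nlinarith
  · rw [div_le_iff₀ h]
    have := sinh_le_mul_cosh u h.le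
    nlinarith

lemma exp_half_le_phiAux (s : ℝ) : Real.exp (s / 2) ≤ phiAux s := by
  rcases eq_or_ne s 0 with rfl | hs
  · simp [phiAux]
  · rw [phiAux_eq hs]
    nth_rewrite 1 [← mul_one (Real.exp (s / 2))]
    exact mul_le_mul_of_nonneg_left (one_le_sinh_div (by simpa using hs)) (Real.exp_pos _).le

lemma phiAux_le (s : ℝ) : phiAux s ≤ (1 + Real.exp s) / 2 := by
  have hre : (1 + Real.exp s) / 2 = Real.exp (s / 2) * Real.cosh (s / 2) := by
    rw [Real.cosh_eq]
    have h1 : Real.exp (s / 2) * Real.exp (s / 2) = Real.exp s := by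
      rw [← Real.exp_add]; ring_nf
    have h2 : Real.exp (s / 2) * Real.exp (-(s / 2)) = 1 := by
      rw [← Real.exp_add]; simp
    rw [← h1]
    nth_rewrite 1 [← h2]
    ring
  rcases eq_or_ne s 0 with rfl | hs
  · simp [phiAux]
  · rw [phiAux_eq hs, hre]
    exact mul_le_mul_of_nonneg_left (sinh_div_le_cosh (by simpa using hs)) (Real.exp_pos _).le

lemma phiAux_continuous : Continuous phiAux := by
  rw [continuous_iff_continuousAt]
  intro s
  rcases eq_or_ne s 0 with rfl | hs
  · rw [← continuousWithinAt_compl_self]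
    have h : Filter.Tendsto (slope Real.exp 0) (nhdsWithin 0 {(0:ℝ)}ᶜ) (nhds 1) := by
      have h2 := Real.hasDerivAt_exp 0
      rw [hasDerivAt_iff_tendsto_slope] at h2
      simpa using h2
    have heq : phiAux =ᶠ[nhdsWithin 0 {(0:ℝ)}ᶜ] slope Real.exp 0 := by
      filter_upwards [self_mem_nhdsWithin] with y hy
      simp only [Set.mem_compl_iff, Set.mem_singleton_iff] at hy
      simp [phiAux, hy, slope_def_field, Real.exp_zero]
    have hval : phiAux 0 = 1 := by simp [phiAux]
    rw [ContinuousWithinAt, hval]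
    exact h.congr' heq.symm
  · have hc : ContinuousAt (fun x => (Real.exp x - 1) / x) s :=
      ((Real.continuous_exp.continuousAt.sub continuousAt_const).div continuousAt_id hs)
    apply hc.congr
    filter_upwards [isOpen_compl_singleton.mem_nhds hs] with y hy
    simp only [Set.mem_compl_iff, Set.mem_singleton_iff] at hy
    simp [phiAux, hy]

lemma wLog_rep {v : ℝ} (hv0 : 0 < v) (hv1 : v < 1) {x : ℝ} (hx : 0 < x) :
    wLogScalar v 1 x = (1 - v) * phiAux (v * Real.log x) +
      v * Real.exp (v * Real.log x) * phiAux ((1 - v) * Real.log x) := by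
  have hvne : v ≠ 0 := hv0.ne'
  have hv1ne : 1 - v ≠ 0 := by linarith
  rcases eq_or_ne (1 : ℝ) x with rfl | hx1
  · simp [wLogScalar, phiAux]
  · have htne : Real.log x ≠ 0 := by
      intro h
      rcases Real.log_eq_zero.mp h with h | h | h <;> [linarith; exact hx1 h.symm; linarith]
    set t := Real.log x with ht
    have hxv : x ^ v = Real.exp (v * t) := by rw [Real.rpow_def_of_pos hx, mul_comm]
    have hxt : x = Real.exp t := (Real.exp_log hx).symm
    have hsplit : Real.exp (v * t) * Real.exp ((1 - v) * t) = Real.exp t := by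
      rw [← Real.exp_add]; ring_nf
    rw [wLogScalar, if_neg hx1, phiAux, if_neg (mul_ne_zero hvne htne),
      phiAux, if_neg (mul_ne_zero hv1ne htne)]
    rw [Real.log_one, Real.one_rpow, one_mul, hxv]
    nth_rewrite 2 [hxt]
    rw [← hsplit]
    rw [← ht]
    field_simp
    ring

lemma amgm_exp {v : ℝ} (hv0 : 0 ≤ v) (hv1 : v ≤ 1) (t : ℝ) :
    Real.exp (v * t) ≤ (1 - v) + v * Real.exp t := by
  have h := Real.geom_mean_le_arith_mean2_weighted (by linarith : (0:ℝ) ≤ 1 - v) hv0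
    zero_le_one (Real.exp_pos t).le (by ring)
  rw [Real.one_rpow, one_mul, ← Real.exp_mul, mul_one, mul_comm t v] at h
  exact h

lemma exp_chain1 {v : ℝ} (hv0 : 0 ≤ v) (hv1 : v ≤ 1) (t : ℝ) :
    Real.exp (v * t) ≤ (1 - v) * Real.exp (v / 2 * t) + v * Real.exp ((1 + v) / 2 * t) := by
  have h := amgm_exp hv0 hv1 (t / 2)
  have e1 : Real.exp (v * t) = Real.exp (v / 2 * t) * Real.exp (v * (t / 2)) := by
    rw [← Real.exp_add]; ring_nf
  have e2 : Real.exp (v / 2 * t) * Real.exp (t / 2) = Real.exp ((1 + v) / 2 * t) := by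
    rw [← Real.exp_add]; ring_nf
  calc Real.exp (v * t) = Real.exp (v / 2 * t) * Real.exp (v * (t / 2)) := e1
    _ ≤ Real.exp (v / 2 * t) * ((1 - v) + v * Real.exp (t / 2)) :=
        mul_le_mul_of_nonneg_left h (Real.exp_pos _).le
    _ = (1 - v) * Real.exp (v / 2 * t) + v * (Real.exp (v / 2 * t) * Real.exp (t / 2)) := by ring
    _ = (1 - v) * Real.exp (v / 2 * t) + v * Real.exp ((1 + v) / 2 * t) := by rw [e2]

lemma exp_chain2 {v : ℝ} (hv0 : 0 ≤ v) (hv1 : v ≤ 1) (t : ℝ) :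
    (1 - v) * Real.exp (v / 2 * t) + v * Real.exp ((1 + v) / 2 * t) ≤
      (1 - v) * phiAux (v * t) + v * Real.exp (v * t) * phiAux ((1 - v) * t) := by
  have h1 : Real.exp (v / 2 * t) ≤ phiAux (v * t) := by
    have := exp_half_le_phiAux (v * t)
    rwa [show v * t / 2 = v / 2 * t by ring] at this
  have h2 : Real.exp ((1 + v) / 2 * t) ≤ Real.exp (v * t) * phiAux ((1 - v) * t) := by
    have h3 := exp_half_le_phiAux ((1 - v) * t)
    have e : Real.exp ((1 + v) / 2 * t) = Real.exp (v * t) * Real.exp ((1 - v) * t / 2) := by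
      rw [← Real.exp_add]; ring_nf
    rw [e]
    exact mul_le_mul_of_nonneg_left h3 (Real.exp_pos _).le
  have := mul_le_mul_of_nonneg_left h1 (by linarith : (0:ℝ) ≤ 1 - v)
  have := mul_le_mul_of_nonneg_left h2 hv0
  nlinarith

lemma exp_chain3 {v : ℝ} (hv0 : 0 ≤ v) (hv1 : v ≤ 1) (t : ℝ) :
    (1 - v) * phiAux (v * t) + v * Real.exp (v * t) * phiAux ((1 - v) * t) ≤
      (1 / 2) * (Real.exp (v * t) + ((1 - v) + v * Real.exp t)) := by
  have h1 : phiAux (v * t) ≤ (1 + Real.exp (v * t)) / 2 := phiAux_le _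
  have h2 : phiAux ((1 - v) * t) ≤ (1 + Real.exp ((1 - v) * t)) / 2 := phiAux_le _
  have e : Real.exp (v * t) * Real.exp ((1 - v) * t) = Real.exp t := by
    rw [← Real.exp_add]; ring_nf
  have h3 := mul_le_mul_of_nonneg_left h1 (by linarith : (0:ℝ) ≤ 1 - v)
  have h4 := mul_le_mul_of_nonneg_left h2
    (mul_nonneg hv0 (Real.exp_pos (v * t)).le)
  nlinarith [Real.exp_pos (v*t)]

lemma rpow_exp_aux {x : ℝ} (hx : 0 < x) (a : ℝ) : x ^ a = Real.exp (a * Real.log x) := by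
  rw [Real.rpow_def_of_pos hx, mul_comm]

section ScalarIneq
variable {v x : ℝ} (hv0 : 0 < v) (hv1 : v < 1) (hx : 0 < x)
include hv0 hv1 hx

lemma sc1 : x ^ v ≤ (1 - v) * x ^ (v / 2) + v * x ^ ((1 + v) / 2) := by
  rw [rpow_exp_aux hx, rpow_exp_aux hx, rpow_exp_aux hx]
  exact exp_chain1 hv0.le hv1.le _

lemma sc2 : (1 - v) * x ^ (v / 2) + v * x ^ ((1 + v) / 2) ≤ wLogScalar v 1 x := by
  rw [rpow_exp_aux hx, rpow_exp_aux hx, wLog_rep hv0 hv1 hx]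
  exact exp_chain2 hv0.le hv1.le _

lemma sc3 : wLogScalar v 1 x ≤ (1 / 2) * (x ^ v + ((1 - v) + v * x)) := by
  rw [rpow_exp_aux hx, wLog_rep hv0 hv1 hx]
  nth_rewrite 5 [← Real.exp_log hx]
  exact exp_chain3 hv0.le hv1.le _

lemma sc4 : (1 / 2) * (x ^ v + ((1 - v) + v * x)) ≤ (1 - v) + v * x := by
  have h : x ^ v ≤ (1 - v) + v * x := by
    rw [rpow_exp_aux hx]
    nth_rewrite 2 [← Real.exp_log hx]
    exact amgm_exp hv0.le hv1.le _
  linarith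

end ScalarIneq

lemma wLog_continuousOn {v : ℝ} (hv0 : 0 < v) (hv1 : v < 1) :
    ContinuousOn (fun x => wLogScalar v 1 x) (Set.Ioi (0:ℝ)) := by
  have hlog : ContinuousOn Real.log (Set.Ioi (0:ℝ)) :=
    Real.continuousOn_log.mono (fun x hx => by
      simp only [Set.mem_compl_iff, Set.mem_singleton_iff]
      exact ne_of_gt hx)
  have h1 : ContinuousOn (fun x => phiAux (v * Real.log x)) (Set.Ioi (0:ℝ)) :=
    phiAux_continuous.comp_continuousOn (continuousOn_const.mul hlog)
  have h2 : ContinuousOn (fun x => phiAux ((1 - v) * Real.log x)) (Set.Ioi (0:ℝ)) :=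
    phiAux_continuous.comp_continuousOn (continuousOn_const.mul hlog)
  have h3 : ContinuousOn (fun x => Real.exp (v * Real.log x)) (Set.Ioi (0:ℝ)) :=
    Real.continuous_exp.comp_continuousOn (continuousOn_const.mul hlog)
  have hG : ContinuousOn (fun x => (1 - v) * phiAux (v * Real.log x) +
      v * Real.exp (v * Real.log x) * phiAux ((1 - v) * Real.log x)) (Set.Ioi (0:ℝ)) :=
    (continuousOn_const.mul h1).add ((continuousOn_const.mul h3).mul h2)
  exact hG.congr (fun x hx => wLog_rep hv0 hv1 hx)

lemma rpow_continuousOn (a : ℝ) : ContinuousOn (fun x : ℝ => x ^ a) (Set.Ioi (0:ℝ)) :=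
  fun x hx => (Real.continuousAt_rpow_const x a (Or.inl (ne_of_gt hx))).continuousWithinAt

set_option maxHeartbeats 2000000 in
set_option synthInstance.maxHeartbeats 1000000 in
/-- For positive invertible operators `A, B` on a complex Hilbert space and `v ∈ (0,1)`,
in the Loewner order:
`A♯_v B ≤ (1-v)(A♯_{v/2} B) + v(A♯_{(1+v)/2} B) ≤ L_v(A,B) ≤ ((A♯_v B)+(A∇_v B))/2 ≤ A∇_v B`. -/
theorem opWGeom_le_opWLog_le_opWArith (A B : H →L[ℂ] H)
    (hA : 0 ≤ A) (hB : 0 ≤ B) (hAu : IsUnit A) (hBu : IsUnit B)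
    (v : ℝ) (hv : v ∈ Set.Ioo (0 : ℝ) 1) :
    opWGeom v A B ≤ (1 - v : ℝ) • opWGeom (v / 2) A B + v • opWGeom ((1 + v) / 2) A B ∧
      (1 - v : ℝ) • opWGeom (v / 2) A B + v • opWGeom ((1 + v) / 2) A B ≤ opWLog v A B ∧
        opWLog v A B ≤ ((1 : ℝ) / 2) • (opWGeom v A B + opWArith v A B) ∧
          ((1 : ℝ) / 2) • (opWGeom v A B + opWArith v A B) ≤ opWArith v A B := by
  obtain ⟨hv0, hv1⟩ := hv
  have hAsa : IsSelfAdjoint A := hA.isSelfAdjoint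
  have hAsp : spectrum ℝ A ⊆ Set.Ioi 0 := by
    intro x hx
    have h0 := spectrum_nonneg_of_nonneg hA hx
    have : x ≠ 0 := by
      rintro rfl
      exact (spectrum.zero_notMem_iff ℝ).mpr hAu hx
    exact lt_of_le_of_ne h0 (Ne.symm this)
  set S := cfc Real.sqrt A with hSdef
  have hS_sa : IsSelfAdjoint S := cfc_predicate _ _
  have hSu : IsUnit S :=
    (isUnit_cfc_iff Real.sqrt A).mpr (fun x hx => (Real.sqrt_pos.mpr (hAsp hx)).ne')
  have hSS : S * S = A := by
    rw [hSdef, ← cfc_mul ..]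
    conv_rhs => rw [← cfc_id ℝ A]
    exact cfc_congr fun x hx => Real.mul_self_sqrt (spectrum_nonneg_of_nonneg hA hx)
  set C := Ring.inverse S * B * Ring.inverse S with hCdef
  have hSinv_sa : IsSelfAdjoint (Ring.inverse S) := by
    rw [IsSelfAdjoint, ← Ring.inverse_star, hS_sa.star_eq]
  have hC_nonneg : 0 ≤ C := by
    have h := star_left_conjugate_nonneg hB (Ring.inverse S)
    rwa [hSinv_sa.star_eq] at h
  have hC_sa : IsSelfAdjoint C := hC_nonneg.isSelfAdjoint
  have hCu : IsUnit C :=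
    ((isUnit_ringInverse.mpr hSu).mul hBu).mul (isUnit_ringInverse.mpr hSu)
  have hCsp : spectrum ℝ C ⊆ Set.Ioi 0 := by
    intro x hx
    have h0 := spectrum_nonneg_of_nonneg hC_nonneg hx
    have : x ≠ 0 := by
      rintro rfl
      exact (spectrum.zero_notMem_iff ℝ).mpr hCu hx
    exact lt_of_le_of_ne h0 (Ne.symm this)
  have hS1 : S * Ring.inverse S = 1 := Ring.mul_inverse_cancel S hSu
  have hS2 : Ring.inverse S * S = 1 := Ring.inverse_mul_cancel S hSu
  have hSCS : S * C * S = B := by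
    rw [hCdef]
    simp only [mul_assoc]
    rw [hS2, mul_one, ← mul_assoc, hS1, one_mul]
  -- the master monotonicity lemma
  have master : ∀ f g : ℝ → ℝ, ContinuousOn f (Set.Ioi 0) → ContinuousOn g (Set.Ioi 0) →
      (∀ x ∈ Set.Ioi (0:ℝ), f x ≤ g x) → S * cfc f C * S ≤ S * cfc g C * S := by
    intro f g hf hg hfg
    exact IsSelfAdjoint.conjugate_le_conjugate
      (cfc_mono (fun x hx => hfg x (hCsp hx)) (hf.mono hCsp) (hg.mono hCsp)) hS_sa
  -- representations
  have geo_rep : ∀ w : ℝ, opWGeom w A B = S * cfc (fun x : ℝ => x ^ w) C * S := fun w => rfl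
  have log_rep : opWLog v A B = S * cfc (fun x => wLogScalar v 1 x) C * S := rfl
  have conj_comb : ∀ (a b : ℝ) (X Y : H →L[ℂ] H),
      S * (a • X + b • Y) * S = a • (S * X * S) + b • (S * Y * S) := by
    intro a b X Y
    simp only [mul_add, add_mul, mul_smul_comm, smul_mul_assoc]
  have combo_rep : (1 - v : ℝ) • opWGeom (v / 2) A B + v • opWGeom ((1 + v) / 2) A B =
      S * cfc (fun x : ℝ => (1 - v) * x ^ (v / 2) + v * x ^ ((1 + v) / 2)) C * S := by
    have e : cfc (fun x : ℝ => (1 - v) * x ^ (v / 2) + v * x ^ ((1 + v) / 2)) C =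
        (1 - v) • cfc (fun x : ℝ => x ^ (v / 2)) C + v • cfc (fun x : ℝ => x ^ ((1 + v) / 2)) C := by
      rw [cfc_add C (fun x : ℝ => (1 - v) * x ^ (v / 2)) (fun x : ℝ => v * x ^ ((1 + v) / 2))
          (continuousOn_const.mul ((rpow_continuousOn (v/2)).mono hCsp))
          (continuousOn_const.mul ((rpow_continuousOn ((1+v)/2)).mono hCsp)),
        cfc_const_mul _ _ C ((rpow_continuousOn (v/2)).mono hCsp),
        cfc_const_mul _ _ C ((rpow_continuousOn ((1+v)/2)).mono hCsp)]
    rw [geo_rep, geo_rep, e, conj_comb]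
  have arith_fun_rep : cfc (fun x : ℝ => (1 - v) + v * x) C = algebraMap ℝ _ (1 - v) + v • C := by
    have h1 : cfc (fun x : ℝ => (1 - v) + v * x) C =
        cfc (fun _ : ℝ => (1 - v)) C + cfc (fun x : ℝ => v * x) C :=
      cfc_add C _ _ continuousOn_const (continuousOn_const.mul continuousOn_id)
    have h2 := cfc_const_mul v id C continuousOn_id
    simp only [id_eq] at h2
    rw [h1, cfc_const (1 - v) C, h2, cfc_id ℝ C]
  have arith_rep : opWArith v A B = S * cfc (fun x : ℝ => (1 - v) + v * x) C * S := by
    rw [opWArith, arith_fun_rep, Algebra.algebraMap_eq_smul_one, conj_comb, mul_one, hSS, hSCS]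
  have haff : ContinuousOn (fun x : ℝ => (1 - v) + v * x) (spectrum ℝ C) :=
    continuousOn_const.add (continuousOn_const.mul continuousOn_id)
  have haffIoi : ContinuousOn (fun x : ℝ => (1 - v) + v * x) (Set.Ioi (0:ℝ)) :=
    continuousOn_const.add (continuousOn_const.mul continuousOn_id)
  have half_rep : ((1 : ℝ) / 2) • (opWGeom v A B + opWArith v A B) =
      S * cfc (fun x : ℝ => (1 / 2) * (x ^ v + ((1 - v) + v * x))) C * S := by
    have e : cfc (fun x : ℝ => (1 / 2) * (x ^ v + ((1 - v) + v * x))) C =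
        ((1:ℝ) / 2) • (cfc (fun x : ℝ => x ^ v) C + cfc (fun x : ℝ => (1 - v) + v * x) C) := by
      rw [cfc_const_mul _ (fun x : ℝ => x ^ v + ((1 - v) + v * x)) C (((rpow_continuousOn v).mono hCsp).add haff),
        cfc_add C _ _ ((rpow_continuousOn v).mono hCsp) haff]
    rw [geo_rep, arith_rep, e]
    simp only [mul_add, add_mul, mul_smul_comm, smul_mul_assoc, smul_add]
  refine ⟨?_, ?_, ?_, ?_⟩
  · rw [geo_rep, combo_rep]
    exact master _ _ (rpow_continuousOn v)
      ((continuousOn_const.mul (rpow_continuousOn (v/2))).add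
        (continuousOn_const.mul (rpow_continuousOn ((1+v)/2))))
      (fun x hx => sc1 hv0 hv1 hx)
  · rw [combo_rep, log_rep]
    exact master _ _
      ((continuousOn_const.mul (rpow_continuousOn (v/2))).add
        (continuousOn_const.mul (rpow_continuousOn ((1+v)/2))))
      (wLog_continuousOn hv0 hv1)
      (fun x hx => sc2 hv0 hv1 hx)
  · rw [log_rep, half_rep]
    exact master _ _ (wLog_continuousOn hv0 hv1)
      (continuousOn_const.mul ((rpow_continuousOn v).add haffIoi))
      (fun x hx => sc3 hv0 hv1 hx)
  · rw [half_rep, arith_rep]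
    exact master _ _
      (continuousOn_const.mul ((rpow_continuousOn v).add haffIoi))
      haffIoi
      (fun x hx => sc4 hv0 hv1 hx)
end

section
/- Let p, q be real numbers with p ≠ 0, q ≠ 0, p ≠ q, let v ∈ (0,1), and let a, b > 0 with a ≠ b (and additionally B_{p;v}(a,b) distinct from a and from b). Then B_{q−p;v}( S_{p,q}(B_{p;v}(a,b), a), S_{p,q}(B_{p;v}(a,b), b) ) = [ (p/q)·(1/(b^p − a^p))·( ((1−v)/v)·(B_{p;v}(a,b)^q − a^q) + (v/(1−v))·(b^q − B_{p;v}(a,b)^q) ) ]^{1/(q−p)}. -/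
/-- The weighted power binomial mean `B_{r;v}(a,b) = ((1-v)a^r + v b^r)^{1/r}` for `r ≠ 0`,
with `B_{0;v}(a,b) = a^{1-v} b^v`. -/
noncomputable def powBinom (r v a b : ℝ) : ℝ :=
  if r = 0 then a ^ (1 - v) * b ^ v else ((1 - v) * a ^ r + v * b ^ r) ^ r⁻¹

/-- The Stolarsky mean `S_{p,q}(a,b) = ((p/q)·(b^q - a^q)/(b^p - a^p))^{1/(q-p)}` for `a ≠ b`,
with `S_{p,q}(a,a) = a`. -/
noncomputable def stolarsky (p q a b : ℝ) : ℝ :=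
  if a = b then a else ((p / q) * (b ^ q - a ^ q) / (b ^ p - a ^ p)) ^ (q - p)⁻¹

private lemma aux_pos (r : ℝ) (hr : r ≠ 0) {x y : ℝ} (hx : 0 < x) (hxy : x < y) :
    0 < (y ^ r - x ^ r) / r := by
  rcases hr.lt_or_gt with h | h
  · apply div_pos_of_neg_of_neg _ h
    simpa [sub_neg] using Real.rpow_lt_rpow_of_neg hx hxy h
  · apply div_pos _ h
    simpa [sub_pos] using Real.rpow_lt_rpow hx.le hxy h

private lemma stol_base_pos (p q : ℝ) (hp : p ≠ 0) (hq : q ≠ 0) {x y : ℝ}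
    (hx : 0 < x) (hy : 0 < y) (hxy : x ≠ y) :
    0 < (p / q) * (y ^ q - x ^ q) / (y ^ p - x ^ p) := by
  have key : ∀ {x y : ℝ}, 0 < x → x < y →
      0 < (p / q) * (y ^ q - x ^ q) / (y ^ p - x ^ p) := by
    intro x y hx hxy
    have h1 := aux_pos q hq hx hxy
    have h2 := aux_pos p hp hx hxy
    have hne : y ^ p - x ^ p ≠ 0 := by
      intro h; rw [h] at h2; simp at h2
    have heq : (p / q) * (y ^ q - x ^ q) / (y ^ p - x ^ p)
        = ((y ^ q - x ^ q) / q) / ((y ^ p - x ^ p) / p) := by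
      field_simp
    rw [heq]
    exact div_pos h1 h2
  rcases hxy.lt_or_gt with h | h
  · exact key hx h
  · have heq : (p / q) * (y ^ q - x ^ q) / (y ^ p - x ^ p)
        = (p / q) * (x ^ q - y ^ q) / (x ^ p - y ^ p) := by
      rw [show (p / q) * (y ^ q - x ^ q) = -((p / q) * (x ^ q - y ^ q)) by ring,
        show (y ^ p - x ^ p) = -((x ^ p - y ^ p)) by ring, neg_div_neg_eq]
    rw [heq]
    exact key hy h

/-- Explicit form of the `S_{p,q}`-weighted mean
`B_{q-p;v}(S_{p,q}(B_{p;v}(a,b), a), S_{p,q}(B_{p;v}(a,b), b))`. -/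
theorem stolarsky_weighted_explicit (p q v a b : ℝ)
    (hp : p ≠ 0) (hq : q ≠ 0) (hpq : p ≠ q) (hv : v ∈ Set.Ioo (0 : ℝ) 1)
    (ha : 0 < a) (hb : 0 < b) (hab : a ≠ b)
    (hBa : powBinom p v a b ≠ a) (hBb : powBinom p v a b ≠ b) :
    powBinom (q - p) v (stolarsky p q (powBinom p v a b) a)
        (stolarsky p q (powBinom p v a b) b) =
      ((p / q) * (1 / (b ^ p - a ^ p)) *
          (((1 - v) / v) * ((powBinom p v a b) ^ q - a ^ q) +
            (v / (1 - v)) * (b ^ q - (powBinom p v a b) ^ q))) ^ (q - p)⁻¹ := by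
  obtain ⟨hv0, hv1⟩ := hv
  have hv1' : 0 < 1 - v := by linarith
  have hqp : q - p ≠ 0 := sub_ne_zero.mpr (Ne.symm hpq)
  set B := powBinom p v a b with hBdef
  have hinner : 0 < (1 - v) * a ^ p + v * b ^ p := by positivity
  have hBpos : 0 < B := by
    rw [hBdef, powBinom, if_neg hp]
    positivity
  have hBp : B ^ p = (1 - v) * a ^ p + v * b ^ p := by
    rw [hBdef, powBinom, if_neg hp, Real.rpow_inv_rpow hinner.le hp]
  -- denominator nonzero
  have hba : b ^ p - a ^ p ≠ 0 := by
    rcases hab.lt_or_gt with h | h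
    · have := aux_pos p hp ha h
      intro hz; rw [hz] at this; simp at this
    · have := aux_pos p hp hb h
      intro hz
      have : (0:ℝ) < (a ^ p - b ^ p) / p := this
      rw [show a ^ p - b ^ p = -(b ^ p - a ^ p) by ring, hz] at this
      simp at this
  -- the two Stolarsky values
  have hS1 : stolarsky p q B a
      = ((p / q) * (a ^ q - B ^ q) / (a ^ p - B ^ p)) ^ (q - p)⁻¹ := by
    rw [stolarsky, if_neg hBa]
  have hS2 : stolarsky p q B b
      = ((p / q) * (b ^ q - B ^ q) / (b ^ p - B ^ p)) ^ (q - p)⁻¹ := by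
    rw [stolarsky, if_neg hBb]
  have h1pos : 0 < (p / q) * (a ^ q - B ^ q) / (a ^ p - B ^ p) :=
    stol_base_pos p q hp hq hBpos ha hBa
  have h2pos : 0 < (p / q) * (b ^ q - B ^ q) / (b ^ p - B ^ p) :=
    stol_base_pos p q hp hq hBpos hb hBb
  rw [powBinom, if_neg hqp, hS1, hS2,
    Real.rpow_inv_rpow h1pos.le hqp, Real.rpow_inv_rpow h2pos.le hqp]
  congr 1
  have e1 : a ^ p - B ^ p = -(v * (b ^ p - a ^ p)) := by rw [hBp]; ring
  have e2 : b ^ p - B ^ p = (1 - v) * (b ^ p - a ^ p) := by rw [hBp]; ring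
  rw [e1, e2]
  field_simp
  ring
end
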